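/- Let A be a mutually uncorrelated set of words of length n ≥ 2 over the four-letter DNA alphabet {A,T,G,C} in which every word ends with the letter G, and fix a = (a_1,…,a_n) ∈ A. For 1 ≤ i ≤ n−1 let k_i = |{A,C,T} \ {a_i}| (so k_i = 2 if a_i ∈ {A,C,T} and k_i = 3 if a_i = G), and define G_{n,ℓ} by G_{n,ℓ} = 3^ℓ for 0 ≤ ℓ ≤ n−1 and G_{n,ℓ} = ∑_{i=1}^{n−1} k_i · G_{n,ℓ−i} for ℓ ≥ n. Then for every ℓ ≥ 0 there is an injection from {0, 1, …, G_{n,ℓ}−1} into C_A(ℓ); in particular |C_A(ℓ)| ≥ G_{n,ℓ}. -/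

import Mathlib

/-- The four-letter DNA alphabet. -/
inductive DNA | A | T | G | C
deriving DecidableEq

/-- Hamming distance between two words (of equal length) given as lists. -/
def hammingD {α : Type*} [DecidableEq α] (x y : List α) : ℕ :=
  (x.zip y).countP (fun p => decide (p.1 ≠ p.2))

/-- A binary word has `D`-bounded running digital sum if in every prefix the
numbers of ones and zeros differ by at most `D`. -/
def brds (D : ℕ) (w : List Bool) : Prop :=
  ∀ k ≤ w.length,
    (((w.take k).count true : ℤ) - ((w.take k).count false : ℤ)).natAbs ≤ D

/-- The letters `G`, `C` of the DNA alphabet. -/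
def isGC : DNA → Bool
  | DNA.G => true
  | DNA.C => true
  | _ => false

/-- A DNA word is `D`-GC-prefix-balanced if in every prefix the number of
letters from {G,C} and the number of letters from {A,T} differ by at most `D`. -/
def gcpb (D : ℕ) (w : List DNA) : Prop :=
  ∀ k ≤ w.length,
    (((w.take k).countP isGC : ℤ) - ((w.take k).countP (fun c => !(isGC c)) : ℤ)).natAbs ≤ D

/-- A word is self-uncorrelated if no proper nonempty prefix equals the suffix
of the same length. -/
def selfUncorr {α : Type*} (w : List α) : Prop :=
  ∀ k, 1 ≤ k → k ≤ w.length - 1 → w.take k ≠ w.drop (w.length - k)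

/-- A set of words is mutually uncorrelated if every word is self-uncorrelated
and for every ordered pair of distinct words `x`, `y` no nonempty prefix of `y`
equals a suffix of `x` of the same length. -/
def mutUncorr {α : Type*} (S : Set (List α)) : Prop :=
  (∀ w ∈ S, selfUncorr w) ∧
  ∀ x ∈ S, ∀ y ∈ S, x ≠ y →
    ∀ k, 1 ≤ k → k ≤ x.length → y.take k ≠ x.drop (x.length - k)

/-- A Dyck word: equal numbers of ones and zeros, and every prefix has at least
as many ones as zeros. -/
def isDyck (w : List Bool) : Prop :=
  w.count true = w.count false ∧
  ∀ k ≤ w.length, (w.take k).count false ≤ (w.take k).count true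

/-- The height of a (Dyck) word is at most `D`: in every prefix the number of
ones exceeds the number of zeros by at most `D`. -/
def heightLe (D : ℕ) (w : List Bool) : Prop :=
  ∀ k ≤ w.length, ((w.take k).count true : ℤ) - ((w.take k).count false : ℤ) ≤ (D : ℤ)

/-- `avoidCount A ℓ`: the number of DNA words of length `ℓ` containing no word
of `A` as a contiguous substring. -/
noncomputable def avoidCount (A : Finset (List DNA)) (l : ℕ) : ℕ :=
  Set.ncard {w : List DNA | w.length = l ∧ ∀ a ∈ A, ¬ a <:+: w}

instance : Fintype DNA :=
  ⟨{DNA.A, DNA.T, DNA.G, DNA.C}, by rintro ⟨⟩ <;> simp⟩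

namespace Stmt16Aux

/-- All words of given length over the three letters A, C, T. -/
def allACT : ℕ → Finset (List DNA)
  | 0 => {[]}
  | l + 1 => (({DNA.A, DNA.C, DNA.T} : Finset DNA)).biUnion
      fun b => (allACT l).image (b :: ·)

lemma card_allACT (l : ℕ) : (allACT l).card = 3 ^ l := by
  induction l with
  | zero => rfl
  | succ l ih =>
    rw [allACT, Finset.card_biUnion]
    · have hterm : ∀ b ∈ ({DNA.A, DNA.C, DNA.T} : Finset DNA),
          ((allACT l).image (b :: ·)).card = 3 ^ l := by
        intro b _
        rw [Finset.card_image_of_injective _ (fun x y h => by simpa using h), ih]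
      rw [Finset.sum_congr rfl hterm, Finset.sum_const]
      simp [pow_succ]
      ring
    · intro b _ b' _ hbb'
      simp only [Finset.disjoint_left, Finset.mem_image]
      rintro w ⟨x, _, rfl⟩ ⟨y, _, h⟩
      exact hbb' (by injection h with h1 _; exact h1.symm)

lemma length_of_mem_allACT : ∀ {l w}, w ∈ allACT l → w.length = l := by
  intro l
  induction l with
  | zero => intro w hw; simp [allACT] at hw; simp [hw]
  | succ l ih =>
    intro w hw
    simp only [allACT, Finset.mem_biUnion, Finset.mem_image] at hw
    obtain ⟨b, _, x, hx, rfl⟩ := hw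
    simp [ih hx]

lemma noG_of_mem_allACT : ∀ {l w}, w ∈ allACT l → ∀ c ∈ w, c ≠ DNA.G := by
  intro l
  induction l with
  | zero => intro w hw; simp [allACT] at hw; simp [hw]
  | succ l ih =>
    intro w hw
    simp only [allACT, Finset.mem_biUnion, Finset.mem_image] at hw
    obtain ⟨b, hb, x, hx, rfl⟩ := hw
    intro c hc
    rcases List.mem_cons.mp hc with rfl | hc
    · simp only [Finset.mem_insert, Finset.mem_singleton] at hb
      rcases hb with rfl | rfl | rfl <;> simp
    · exact ih hx c hc

/-- The recursively defined set of good words. -/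
def Sset (a : List DNA) (n : ℕ) (l : ℕ) : Finset (List DNA) :=
  if h : l < n ∨ n < 2 then allACT l
  else (Finset.Icc 1 (n - 1)).attach.biUnion fun i =>
    ((({DNA.A, DNA.C, DNA.T} : Finset DNA) \ {a.getD (i.1 - 1) DNA.A})).biUnion fun b =>
      (Sset a n (l - i.1)).image fun w => a.take (i.1 - 1) ++ b :: w
  termination_by l
  decreasing_by
    have h1 := (Finset.mem_Icc.mp i.2).1
    omega

lemma Sset_eq_of_lt {a : List DNA} {n l : ℕ} (h : l < n) : Sset a n l = allACT l := by
  rw [Sset, dif_pos (Or.inl h)]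

lemma Sset_eq_of_ge {a : List DNA} {n l : ℕ} (hn : 2 ≤ n) (h : n ≤ l) :
    Sset a n l = (Finset.Icc 1 (n - 1)).attach.biUnion fun i =>
      ((({DNA.A, DNA.C, DNA.T} : Finset DNA) \ {a.getD (i.1 - 1) DNA.A})).biUnion fun b =>
        (Sset a n (l - i.1)).image fun w => a.take (i.1 - 1) ++ b :: w := by
  rw [Sset, dif_neg (by omega)]

lemma mem_Sset_ge {a : List DNA} {n l : ℕ} (hn : 2 ≤ n) (h : n ≤ l) {w : List DNA} :
    w ∈ Sset a n l ↔ ∃ i, 1 ≤ i ∧ i ≤ n - 1 ∧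
      ∃ b ∈ (({DNA.A, DNA.C, DNA.T} : Finset DNA) \ {a.getD (i - 1) DNA.A}),
        ∃ w' ∈ Sset a n (l - i), w = a.take (i - 1) ++ b :: w' := by
  rw [Sset_eq_of_ge hn h]
  constructor
  · intro hw
    obtain ⟨i, -, hw⟩ := Finset.mem_biUnion.mp hw
    obtain ⟨b, hb, hw⟩ := Finset.mem_biUnion.mp hw
    obtain ⟨w', hw', rfl⟩ := Finset.mem_image.mp hw
    have hi := Finset.mem_Icc.mp i.2
    exact ⟨i.1, hi.1, hi.2, b, hb, w', hw', rfl⟩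
  · rintro ⟨i, hi1, hi2, b, hb, w', hw', rfl⟩
    exact Finset.mem_biUnion.mpr ⟨⟨i, Finset.mem_Icc.mpr ⟨hi1, hi2⟩⟩, Finset.mem_attach _ _,
      Finset.mem_biUnion.mpr ⟨b, hb, Finset.mem_image.mpr ⟨w', hw', rfl⟩⟩⟩

lemma length_of_mem_Sset {a : List DNA} {n : ℕ} (hn : 2 ≤ n) (han : a.length = n) :
    ∀ l, ∀ w ∈ Sset a n l, w.length = l := by
  intro l
  induction l using Nat.strong_induction_on with
  | _ l ih =>
    intro w hw
    by_cases h : l < n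
    · rw [Sset_eq_of_lt h] at hw
      exact length_of_mem_allACT hw
    · obtain ⟨i, hi1, hi2, b, hb, w', hw', rfl⟩ := (mem_Sset_ge hn (by omega)).mp hw
      have hw'l := ih (l - i) (by omega) w' hw'
      simp only [List.length_append, List.length_take, List.length_cons, han, hw'l]
      omega

/-- Block-structure invariant: every occurrence of `G` terminates a copy of a
prefix of `a` of length between 1 and `n - 2`. -/
def Inv (a : List DNA) (n : ℕ) (w : List DNA) : Prop :=
  ∀ u v, w = u ++ DNA.G :: v → ∃ j, 1 ≤ j ∧ j ≤ n - 2 ∧ a.take j <:+ u ++ [DNA.G]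

lemma inv_of_mem_Sset {a : List DNA} {n : ℕ} (hn : 2 ≤ n) (han : a.length = n) :
    ∀ l, ∀ w ∈ Sset a n l, Inv a n w := by
  intro l
  induction l using Nat.strong_induction_on with
  | _ l ih =>
    intro w hw
    by_cases h : l < n
    · rw [Sset_eq_of_lt h] at hw
      intro u v hweq
      exact absurd rfl
        (noG_of_mem_allACT hw DNA.G (by rw [hweq]; exact List.mem_append_right _ (by simp)))
    · obtain ⟨i, hi1, hi2, b, hb, w', hw', rfl⟩ := (mem_Sset_ge hn (by omega)).mp hw
      have hbACT : b ≠ DNA.G ∧ b ≠ a.getD (i - 1) DNA.A := by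
        rw [Finset.mem_sdiff] at hb
        constructor
        · simp only [Finset.mem_insert, Finset.mem_singleton] at hb
          rcases hb.1 with rfl | rfl | rfl <;> simp
        · simpa using hb.2
      have hinv' : Inv a n w' := ih (l - i) (by omega) w' hw'
      intro u v hweq
      rcases List.append_eq_append_iff.mp hweq with ⟨a', h1, h2⟩ | ⟨c', h1, h2⟩
      · -- u = a.take (i-1) ++ a', b :: w' = a' ++ G :: v
        rcases a' with _ | ⟨b0, a''⟩
        · exfalso
          simp only [List.nil_append, List.cons.injEq] at h2
          exact hbACT.1 h2.1
        · have h2' : b = b0 ∧ w' = a'' ++ DNA.G :: v := by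
            injection h2 with h3 h4
            exact ⟨h3, h4⟩
          obtain ⟨rfl, hw'eq⟩ := h2'
          obtain ⟨j, hj1, hj2, hjsuf⟩ := hinv' a'' v hw'eq
          refine ⟨j, hj1, hj2, hjsuf.trans ?_⟩
          refine ⟨a.take (i - 1) ++ [b], ?_⟩
          rw [h1]
          simp
      · -- a.take (i-1) = u ++ c', G :: v = c' ++ b :: w'
        rcases c' with _ | ⟨g0, c''⟩
        · exfalso
          simp only [List.nil_append] at h2
          exact hbACT.1 (by injection h2 with h3 _; exact h3.symm)
        · have h2' : g0 = DNA.G := by injection h2 with h3 _; exact h3.symm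
          subst h2'
          -- a.take (i-1) = u ++ G :: c''
          refine ⟨u.length + 1, by omega, ?_, ?_⟩
          · have hlen := congrArg List.length h1
            simp only [List.length_take, List.length_append, List.length_cons, han] at hlen
            omega
          · have htk : a.take (u.length + 1) = u ++ [DNA.G] := by
              have h3 : a.take (i - 1) = (u ++ [DNA.G]) ++ c'' := by
                rw [h1]; simp
              have h4 : u.length + 1 ≤ i - 1 := by
                have hlen := congrArg List.length h1
                simp only [List.length_take, List.length_append, List.length_cons, han] at hlen
                omega
              calc a.take (u.length + 1) = (a.take (i - 1)).take (u.length + 1) := by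
                    rw [List.take_take, min_eq_left h4]
                _ = ((u ++ [DNA.G]) ++ c'').take (u ++ [DNA.G]).length := by
                    rw [h3]; simp
                _ = u ++ [DNA.G] := List.take_left
            rw [htk]

lemma suffix_of_suffix_append {α : Type*} {s u x : List α} (h : s <:+ u ++ x)
    (hl : s.length ≤ x.length) : s <:+ x := by
  obtain ⟨t, ht⟩ := h
  have hlt : u.length ≤ t.length := by
    have := congrArg List.length ht
    simp only [List.length_append] at this
    omega
  refine ⟨t.drop u.length, ?_⟩
  have h2 : (t ++ s).drop u.length = x := by
    rw [ht]; exact List.drop_left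
  rw [← h2, List.drop_append_of_le_length hlt]

lemma drop_eq_of_suffix {α : Type*} {s x : List α} (h : s <:+ x) :
    x.drop (x.length - s.length) = s := by
  obtain ⟨t, rfl⟩ := h
  have : (t ++ s).length - s.length = t.length := by simp
  rw [this, List.drop_left]

end Stmt16Aux

namespace Stmt16Aux

lemma block_ne {a : List DNA} {n : ℕ} (han : a.length = n) {i i' : ℕ}
    (hi1 : 1 ≤ i) (hii' : i < i') (hi'2 : i' ≤ n - 1) {b b' : DNA}
    (hb : b ≠ a.getD (i - 1) DNA.A) (w1 w2 : List DNA) :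
    a.take (i - 1) ++ b :: w1 ≠ a.take (i' - 1) ++ b' :: w2 := by
  intro h
  apply hb
  have hlen1 : (a.take (i - 1)).length = i - 1 := by
    rw [List.length_take, han, min_eq_left (by omega)]
  have hlen2 : (a.take (i' - 1)).length = i' - 1 := by
    rw [List.length_take, han, min_eq_left (by omega)]
  have h1 : (a.take (i - 1) ++ b :: w1)[i - 1]? = some b := by
    rw [List.getElem?_append_right hlen1.le, hlen1, Nat.sub_self]
    simp
  have h2 : (a.take (i' - 1) ++ b' :: w2)[i - 1]? = a[i - 1]? := by
    rw [List.getElem?_append_left (by rw [hlen2]; omega), List.getElem?_take_of_lt (by omega)]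
  rw [h] at h1
  rw [h2] at h1
  rw [List.getD_eq_getElem?_getD, h1]
  rfl

end Stmt16Aux

/-- for a mutually uncorrelated set `A` of DNA words of length
`n ≥ 2` all ending in `G`, and `a ∈ A`, with `k_i = |{A,C,T} \ {a_i}|` and
`G_{n,ℓ}` defined by `G_{n,ℓ} = 3^ℓ` for `ℓ ≤ n-1` and
`G_{n,ℓ} = ∑_{i=1}^{n-1} k_i G_{n,ℓ-i}` for `ℓ ≥ n`, there is an injection of
`{0,…,G_{n,ℓ}-1}` into `C_A(ℓ)`; in particular `|C_A(ℓ)| ≥ G_{n,ℓ}`. -/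
theorem stmt16 (n M : ℕ) (hn : 2 ≤ n) (A : Finset (List DNA))
    (hcard : A.card = M) (hlen : ∀ w ∈ A, w.length = n)
    (hmu : mutUncorr (A : Set (List DNA)))
    (hG : ∀ w ∈ A, w.getLast? = some DNA.G)
    (a : List DNA) (ha : a ∈ A)
    (k : ℕ → ℕ)
    (hk : ∀ i, 1 ≤ i → i ≤ n - 1 →
      k i = (({DNA.A, DNA.C, DNA.T} : Finset DNA) \ {a.getD (i - 1) DNA.A}).card)
    (Gm : ℕ → ℕ)
    (hGm1 : ∀ l, l ≤ n - 1 → Gm l = 3 ^ l)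
    (hGm2 : ∀ l, n ≤ l → Gm l = ∑ i ∈ Finset.Icc 1 (n - 1), k i * Gm (l - i)) :
    ∀ l : ℕ,
      (∃ f : Fin (Gm l) → List DNA, Function.Injective f ∧
        ∀ x, (f x).length = l ∧ ∀ w ∈ A, ¬ w <:+: f x) ∧
      Gm l ≤ avoidCount A l := by
  classical
  obtain ⟨hself, hpair⟩ := hmu
  have han : a.length = n := hlen a ha
  -- cardinality of the good sets
  have hGc : ∀ l, (Stmt16Aux.Sset a n l).card = Gm l := by
    intro l
    induction l using Nat.strong_induction_on with
    | _ l ih =>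
      by_cases h : l < n
      · rw [Stmt16Aux.Sset_eq_of_lt h, Stmt16Aux.card_allACT, hGm1 l (by omega)]
      · rw [Stmt16Aux.Sset_eq_of_ge hn (by omega), hGm2 l (by omega)]
        have hdisjo : ∀ i ∈ (Finset.Icc 1 (n - 1)).attach,
            ∀ i' ∈ (Finset.Icc 1 (n - 1)).attach, i ≠ i' →
            Disjoint
              ((({DNA.A, DNA.C, DNA.T} : Finset DNA) \ {a.getD (i.1 - 1) DNA.A}).biUnion
                fun b => (Stmt16Aux.Sset a n (l - i.1)).image fun w => a.take (i.1 - 1) ++ b :: w)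
              ((({DNA.A, DNA.C, DNA.T} : Finset DNA) \ {a.getD (i'.1 - 1) DNA.A}).biUnion
                fun b => (Stmt16Aux.Sset a n (l - i'.1)).image
                  fun w => a.take (i'.1 - 1) ++ b :: w) := by
          intro i _ i' _ hne
          simp only [Finset.disjoint_left, Finset.mem_biUnion, Finset.mem_image]
          rintro w ⟨b, hb, w1, hw1, rfl⟩ ⟨b', hb', w2, hw2, heq⟩
          have hi := Finset.mem_Icc.mp i.2
          have hi' := Finset.mem_Icc.mp i'.2
          have hbne : b ≠ a.getD (i.1 - 1) DNA.A := by
            rw [Finset.mem_sdiff] at hb; simpa using hb.2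
          have hbne' : b' ≠ a.getD (i'.1 - 1) DNA.A := by
            rw [Finset.mem_sdiff] at hb'; simpa using hb'.2
          have hne' : i.1 ≠ i'.1 := fun hh => hne (Subtype.ext hh)
          rcases Nat.lt_or_ge i.1 i'.1 with hlt | hge
          · exact Stmt16Aux.block_ne han hi.1 hlt hi'.2 hbne w1 w2 heq.symm
          · exact Stmt16Aux.block_ne han hi'.1 (by omega) hi.2 hbne' w2 w1 heq
        rw [Finset.card_biUnion hdisjo]
        have hterm : ∀ i : {x // x ∈ Finset.Icc 1 (n - 1)},
            ((({DNA.A, DNA.C, DNA.T} : Finset DNA) \ {a.getD (i.1 - 1) DNA.A}).biUnion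
              fun b => (Stmt16Aux.Sset a n (l - i.1)).image
                fun w => a.take (i.1 - 1) ++ b :: w).card
              = k i.1 * Gm (l - i.1) := by
          intro i
          have hi := Finset.mem_Icc.mp i.2
          rw [Finset.card_biUnion]
          · have h1 : ∀ b ∈ (({DNA.A, DNA.C, DNA.T} : Finset DNA) \ {a.getD (i.1 - 1) DNA.A}),
                ((Stmt16Aux.Sset a n (l - i.1)).image
                  fun w => a.take (i.1 - 1) ++ b :: w).card = Gm (l - i.1) := by
              intro b _
              rw [Finset.card_image_of_injective _ (fun x y hxy => by simpa using hxy),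
                ih (l - i.1) (by omega)]
            rw [Finset.sum_congr rfl h1, Finset.sum_const, hk i.1 hi.1 hi.2, smul_eq_mul]
          · intro b _ b' _ hbb'
            simp only [Finset.disjoint_left, Finset.mem_image]
            rintro w ⟨x, _, rfl⟩ ⟨y, _, hxy⟩
            apply hbb'
            have h2 := List.append_cancel_left hxy
            injection h2 with h3 _
            exact h3.symm
        calc ∑ i ∈ (Finset.Icc 1 (n - 1)).attach,
              ((({DNA.A, DNA.C, DNA.T} : Finset DNA) \ {a.getD (i.1 - 1) DNA.A}).biUnion
                fun b => (Stmt16Aux.Sset a n (l - i.1)).image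
                  fun w => a.take (i.1 - 1) ++ b :: w).card
            = ∑ i ∈ (Finset.Icc 1 (n - 1)).attach, k i.1 * Gm (l - i.1) :=
              Finset.sum_congr rfl (fun i _ => hterm i)
          _ = ∑ i ∈ Finset.Icc 1 (n - 1), k i * Gm (l - i) :=
              Finset.sum_attach (Finset.Icc 1 (n - 1)) (fun i => k i * Gm (l - i))
  -- avoidance
  have havoid : ∀ l w, w ∈ Stmt16Aux.Sset a n l → ∀ x ∈ A, ¬ x <:+: w := by
    intro l w hw x hx hinf
    have hinv := Stmt16Aux.inv_of_mem_Sset hn han l w hw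
    have hxlen : x.length = n := hlen x hx
    rcases x.eq_nil_or_concat with rfl | ⟨y, c, hxe⟩
    · simp at hxlen; omega
    · have hc : c = DNA.G := by
        have hgl := hG x hx
        rw [hxe, List.concat_eq_append, List.getLast?_concat] at hgl
        injection hgl
      subst hc
      obtain ⟨s, t, hst⟩ := hinf
      have hweq : w = (s ++ y) ++ DNA.G :: t := by
        rw [← hst, hxe, List.concat_eq_append]; simp
      obtain ⟨j, hj1, hj2, hsuf⟩ := hinv (s ++ y) t hweq
      have hsuf2 : a.take j <:+ x := by
        apply Stmt16Aux.suffix_of_suffix_append (u := s)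
        · have hre : (s ++ y) ++ [DNA.G] = s ++ x := by
            rw [hxe, List.concat_eq_append]; simp
          rwa [hre] at hsuf
        · rw [List.length_take, han, hxlen]; omega
      have hdrop : x.drop (x.length - j) = a.take j := by
        have h3 := Stmt16Aux.drop_eq_of_suffix hsuf2
        rwa [List.length_take, han, min_eq_left (by omega)] at h3
      by_cases hxa : x = a
      · subst hxa
        exact hself x (by simpa using hx) j hj1 (by rw [hxlen]; omega) hdrop.symm
      · exact hpair x (by simpa using hx) a (by simpa using ha) hxa j hj1
          (by rw [hxlen]; omega) hdrop.symm
  intro l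
  have hSc := hGc l
  constructor
  · let e := (Stmt16Aux.Sset a n l).equivFin
    refine ⟨fun x => (e.symm ⟨x.1, by rw [hSc]; exact x.2⟩).1, ?_, ?_⟩
    · intro x y hxy
      have h1 := e.symm.injective (Subtype.ext hxy)
      have h2 := congrArg Fin.val h1
      exact Fin.ext h2
    · intro x
      have hm := (e.symm ⟨x.1, by rw [hSc]; exact x.2⟩).2
      exact ⟨Stmt16Aux.length_of_mem_Sset hn han l _ hm,
        fun w hw => havoid l _ hm w hw⟩
  · have hsub : ↑(Stmt16Aux.Sset a n l) ⊆
        {w : List DNA | w.length = l ∧ ∀ x ∈ A, ¬ x <:+: w} := by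
      intro w hw
      have hw' : w ∈ Stmt16Aux.Sset a n l := Finset.mem_coe.mp hw
      exact ⟨Stmt16Aux.length_of_mem_Sset hn han l w hw',
        fun x hx => havoid l w hw' x hx⟩
    have hfin : {w : List DNA | w.length = l ∧ ∀ x ∈ A, ¬ x <:+: w}.Finite :=
      (List.finite_length_eq DNA l).subset (fun w hw => hw.1)
    rw [avoidCount]
    calc Gm l = (Stmt16Aux.Sset a n l).card := hSc.symm
      _ = (↑(Stmt16Aux.Sset a n l) : Set (List DNA)).ncard := (Set.ncard_coe_finset _).symm
      _ ≤ _ := Set.ncard_le_ncard hsub hfin
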